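/- Let 𝒴 ⊆ ℂⁿ be a p-dimensional subspace, let t ∈ {p, …, n−1} and i ∈ {1, …, p}, and define 𝒳̃ = span{x_{t−p+i+1}, …, x_t}^⊥ and 𝒴̃ = 𝒳̃ ∩ 𝒴. Then dim 𝒴̃ ≥ i. Moreover, if the smallest Ritz value η_p of A in 𝒴 satisfies η_p > λ_{t+1}, and f : ℝ → ℝ satisfies f(λⱼ) ≠ 0 for every j ∈ {1, …, t−p+i}, then for every i-dimensional subspace 𝒴̃_i ⊆ 𝒴̃ the subspace 𝒴̃'_i = f(A)𝒴̃_i has dimension i. If in addition |f(λ₁)| ≥ ⋯ ≥ |f(λ_{t−p+i})| > ν_t where ν_t = max_{j ∈ {t+1, …, n}} |f(λⱼ)|, and ỹ ∈ 𝒴̃_i is a nonzero vector such that ỹ' = f(A)ỹ is a Ritz vector of A in 𝒴̃'_i associated with the smallest (i-th largest) Ritz value η̃'_i of A in 𝒴̃'_i, and λ_{t−p+i} > η̃'_i, then with w̃ = Σ_{j=1}^{t−p+i} xⱼ(xⱼᴴỹ), z̃ = Σ_{j=t+1}^{n} xⱼ(xⱼᴴỹ), and ỹ° = f(λ_{t−p+i})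 w̃ + ν_t z̃, one has λ_{t−p+i} > η̃'_i = ρ(ỹ') ≥ ρ(ỹ°) ≥ ρ(ỹ) ≥ η̃_i > λ_{t+1}, where η̃_i is the smallest Ritz value of A in 𝒴̃_i, and (ρ(w̃) − ρ(ỹ°))/(ρ(ỹ°) − ρ(z̃)) = (ν_t²/|f(λ_{t−p+i})|²) · (ρ(w̃) − ρ(ỹ))/(ρ(ỹ) − ρ(z̃)). -/

import Mathlib

/-- The Rayleigh quotient `ρ(v) = (vᴴAv)/(vᴴv)` of the Hermitian matrix `A`. -/
noncomputable def rayleigh {n : ℕ} (A : Matrix (Fin n) (Fin n) ℂ)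
    (v : EuclideanSpace ℂ (Fin n)) : ℝ :=
  ((inner ℂ v (Matrix.toEuclideanLin A v) : ℂ)).re / ‖v‖ ^ 2

/-- The `i`-th largest Ritz value (1-indexed, `i ∈ {1, …, dim S}`) of the Hermitian
matrix `A` in the subspace `S`, characterized via the Courant–Fischer max-min
principle applied inside `S` (equivalently, the `i`-th largest eigenvalue of
`SᴴAS` for any orthonormal basis matrix `S`). -/
noncomputable def ritzValue {n : ℕ} (A : Matrix (Fin n) (Fin n) ℂ)
    (S : Submodule ℂ (EuclideanSpace ℂ (Fin n))) (i : ℕ) : ℝ :=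
  sSup {r : ℝ | ∃ T : Submodule ℂ (EuclideanSpace ℂ (Fin n)), T ≤ S ∧
    Module.finrank ℂ T = i ∧ ∀ v ∈ T, v ≠ 0 → r ≤ rayleigh A v}

/-- `f(A) = ∑ j, f(λ_j) x_j x_jᴴ` as a linear operator, for eigenvalues `lam`
and orthonormal eigenvectors `x` of `A`. -/
noncomputable def matFun {n : ℕ} (lam : Fin n → ℝ)
    (x : Fin n → EuclideanSpace ℂ (Fin n)) (f : ℝ → ℝ) :
    EuclideanSpace ℂ (Fin n) →ₗ[ℂ] EuclideanSpace ℂ (Fin n) :=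
  ∑ j : Fin n, (f (lam j) : ℂ) • ((innerSL ℂ (x j)).toLinearMap.smulRight (x j))

/-- `y` is a Ritz vector of `A` in `S` associated with the Ritz value `η`:
`y ∈ S`, `y ≠ 0`, `ρ(y) = η` and `Ay − ηy ⊥ S`. -/
def IsRitzVector {n : ℕ} (A : Matrix (Fin n) (Fin n) ℂ)
    (S : Submodule ℂ (EuclideanSpace ℂ (Fin n))) (η : ℝ)
    (y : EuclideanSpace ℂ (Fin n)) : Prop :=
  y ∈ S ∧ y ≠ 0 ∧ rayleigh A y = η ∧
    ∀ v ∈ S, (inner ℂ v (Matrix.toEuclideanLin A y - (η : ℂ) • y) : ℂ) = 0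

open Finset

lemma inner_sum_sum' {n : ℕ} {x : Fin n → EuclideanSpace ℂ (Fin n)} (hx : Orthonormal ℂ x)
    (c d : Fin n → ℂ) :
    (inner ℂ (∑ j, c j • x j) (∑ j, d j • x j) : ℂ) = ∑ j, (starRingEnd ℂ) (c j) * d j := by
  rw [inner_sum]
  congr 1; ext j
  rw [sum_inner]
  simp [inner_smul_left, inner_smul_right, orthonormal_iff_ite.mp hx, mul_comm]

lemma norm_sq_sum' {n : ℕ} {x : Fin n → EuclideanSpace ℂ (Fin n)} (hx : Orthonormal ℂ x)
    (c : Fin n → ℂ) :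
    ‖(∑ j, c j • x j : EuclideanSpace ℂ (Fin n))‖ ^ 2 = ∑ j, ‖c j‖ ^ 2 := by
  rw [← inner_self_eq_norm_sq (𝕜 := ℂ), inner_sum_sum' hx, map_sum]
  congr 1; ext j
  simp [Complex.conj_mul', ← Complex.ofReal_pow]

lemma coord_sum' {n : ℕ} {x : Fin n → EuclideanSpace ℂ (Fin n)} (hx : Orthonormal ℂ x)
    (c : Fin n → ℂ) (k : Fin n) :
    (inner ℂ (x k) (∑ j, c j • x j) : ℂ) = c k := by
  rw [inner_sum]
  simp [inner_smul_right, orthonormal_iff_ite.mp hx]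

lemma rayleigh_formula' {n : ℕ} {A : Matrix (Fin n) (Fin n) ℂ}
    {lam : Fin n → ℝ} {x : Fin n → EuclideanSpace ℂ (Fin n)} (hx : Orthonormal ℂ x)
    (heig : ∀ j, Matrix.toEuclideanLin A (x j) = (lam j : ℂ) • x j)
    (c : Fin n → ℂ) :
    rayleigh A (∑ j, c j • x j) =
      (∑ j, lam j * ‖c j‖ ^ 2) / (∑ j, ‖c j‖ ^ 2) := by
  have hAv : Matrix.toEuclideanLin A (∑ j, c j • x j) = ∑ j, ((lam j : ℂ) * c j) • x j := by
    rw [map_sum]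
    congr 1; ext j
    rw [map_smul, heig, smul_smul, mul_comm]
  have hnum : (inner ℂ (∑ j, c j • x j) (Matrix.toEuclideanLin A (∑ j, c j • x j)) : ℂ).re
      = ∑ j, lam j * ‖c j‖ ^ 2 := by
    rw [hAv, inner_sum_sum' hx, Complex.re_sum]
    congr 1; ext j
    have h1 : (starRingEnd ℂ) (c j) * ((lam j : ℂ) * c j)
        = (lam j : ℂ) * ((starRingEnd ℂ) (c j) * c j) := by ring
    rw [h1, Complex.conj_mul', ← Complex.ofReal_pow, ← Complex.ofReal_mul, Complex.ofReal_re]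
  rw [rayleigh, hnum, norm_sq_sum' hx]

lemma basis_expand' {n : ℕ} (hn : 0 < n) {x : Fin n → EuclideanSpace ℂ (Fin n)}
    (hx : Orthonormal ℂ x) (v : EuclideanSpace ℂ (Fin n)) :
    v = ∑ j, (inner ℂ (x j) v : ℂ) • x j := by
  haveI : Nonempty (Fin n) := ⟨⟨0, hn⟩⟩
  have hsp : Submodule.span ℂ (Set.range x) = ⊤ :=
    hx.linearIndependent.span_eq_top_of_card_eq_finrank
      (by simp [finrank_euclideanSpace_fin])
  let b : OrthonormalBasis (Fin n) ℂ (EuclideanSpace ℂ (Fin n)) := OrthonormalBasis.mk hx hsp.ge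
  calc v = ∑ j, b.repr v j • b j := (b.sum_repr v).symm
  _ = ∑ j, (inner ℂ (x j) v : ℂ) • x j := by
      congr 1; ext j
      rw [b.repr_apply_apply]
      simp [b, OrthonormalBasis.coe_mk]

lemma rayleigh_eq' {n : ℕ} (hn : 0 < n) {A : Matrix (Fin n) (Fin n) ℂ}
    {lam : Fin n → ℝ} {x : Fin n → EuclideanSpace ℂ (Fin n)} (hx : Orthonormal ℂ x)
    (heig : ∀ j, Matrix.toEuclideanLin A (x j) = (lam j : ℂ) • x j)
    (v : EuclideanSpace ℂ (Fin n)) :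
    rayleigh A v = (∑ j, lam j * ‖(inner ℂ (x j) v : ℂ)‖ ^ 2)
      / (∑ j, ‖(inner ℂ (x j) v : ℂ)‖ ^ 2) := by
  conv_lhs => rw [basis_expand' hn hx v]
  exact rayleigh_formula' hx heig _

lemma rayleigh_bounds' {n : ℕ} (hn : 0 < n) {A : Matrix (Fin n) (Fin n) ℂ}
    {lam : Fin n → ℝ} (hlam : Antitone lam)
    {x : Fin n → EuclideanSpace ℂ (Fin n)} (hx : Orthonormal ℂ x)
    (heig : ∀ j, Matrix.toEuclideanLin A (x j) = (lam j : ℂ) • x j)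
    (v : EuclideanSpace ℂ (Fin n)) (hv : v ≠ 0) :
    lam ⟨n - 1, by omega⟩ ≤ rayleigh A v ∧ rayleigh A v ≤ lam ⟨0, hn⟩ := by
  set c : Fin n → ℂ := fun j => (inner ℂ (x j) v : ℂ) with hc
  have hD : (0:ℝ) < ∑ j, ‖c j‖ ^ 2 := by
    rw [← norm_sq_sum' hx, ← basis_expand' hn hx v]
    have : ‖v‖ ≠ 0 := norm_ne_zero_iff.mpr hv
    positivity
  have hray : rayleigh A v = (∑ j, lam j * ‖c j‖ ^ 2) / (∑ j, ‖c j‖ ^ 2) :=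
    rayleigh_eq' hn hx heig v
  constructor
  · rw [hray, le_div_iff₀ hD]
    calc lam ⟨n-1, by omega⟩ * ∑ j, ‖c j‖ ^ 2 = ∑ j, lam ⟨n-1, by omega⟩ * ‖c j‖ ^ 2 := by
          rw [Finset.mul_sum]
    _ ≤ ∑ j, lam j * ‖c j‖ ^ 2 :=
          Finset.sum_le_sum fun j _ =>
            mul_le_mul_of_nonneg_right (hlam (by simp [Fin.le_def]; omega)) (by positivity)
  · rw [hray, div_le_iff₀ hD]
    calc (∑ j, lam j * ‖c j‖ ^ 2) ≤ ∑ j, lam ⟨0, hn⟩ * ‖c j‖ ^ 2 :=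
          Finset.sum_le_sum fun j _ =>
            mul_le_mul_of_nonneg_right (hlam (by simp [Fin.le_def])) (by positivity)
    _ = lam ⟨0, hn⟩ * ∑ j, ‖c j‖ ^ 2 := by rw [Finset.mul_sum]

lemma ritz_le' {n : ℕ} (hn : 0 < n) {A : Matrix (Fin n) (Fin n) ℂ}
    {lam : Fin n → ℝ} (hlam : Antitone lam)
    {x : Fin n → EuclideanSpace ℂ (Fin n)} (hx : Orthonormal ℂ x)
    (heig : ∀ j, Matrix.toEuclideanLin A (x j) = (lam j : ℂ) • x j)
    {S : Submodule ℂ (EuclideanSpace ℂ (Fin n))} {k : ℕ}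
    (hS : Module.finrank ℂ S = k)
    {v : EuclideanSpace ℂ (Fin n)} (hvS : v ∈ S) (hv : v ≠ 0) :
    ritzValue A S k ≤ rayleigh A v := by
  apply csSup_le
  · exact ⟨lam ⟨n-1, by omega⟩, S, le_rfl, hS,
      fun w _ hw => (rayleigh_bounds' hn hlam hx heig w hw).1⟩
  · rintro r ⟨T, hTS, hT, hr⟩
    have : T = S := Submodule.eq_of_le_of_finrank_le hTS (by rw [hS, hT])
    exact hr v (this ▸ hvS) hv

lemma ritz_ge' {n : ℕ} (hn : 0 < n) {A : Matrix (Fin n) (Fin n) ℂ}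
    {lam : Fin n → ℝ} (hlam : Antitone lam)
    {x : Fin n → EuclideanSpace ℂ (Fin n)} (hx : Orthonormal ℂ x)
    (heig : ∀ j, Matrix.toEuclideanLin A (x j) = (lam j : ℂ) • x j)
    {S T : Submodule ℂ (EuclideanSpace ℂ (Fin n))} {k : ℕ} (hk : 1 ≤ k)
    (hTS : T ≤ S) (hT : Module.finrank ℂ T = k) {r : ℝ}
    (hr : ∀ v ∈ T, v ≠ 0 → r ≤ rayleigh A v) :
    r ≤ ritzValue A S k := by
  apply le_csSup
  · refine ⟨lam ⟨0, hn⟩, ?_⟩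
    rintro r' ⟨T', _, hT', hr'⟩
    have hbot : T' ≠ ⊥ := by
      intro h
      rw [h] at hT'
      simp at hT'
      omega
    obtain ⟨w, hwT', hw⟩ := Submodule.exists_mem_ne_zero_of_ne_bot hbot
    exact le_trans (hr' w hwT' hw) (rayleigh_bounds' hn hlam hx heig w hw).2
  · exact ⟨T, hTS, hT, hr⟩

lemma matFun_apply' {n : ℕ} (lam : Fin n → ℝ)
    (x : Fin n → EuclideanSpace ℂ (Fin n)) (f : ℝ → ℝ)
    (v : EuclideanSpace ℂ (Fin n)) :
    matFun lam x f v = ∑ j : Fin n, ((f (lam j) : ℂ) * (inner ℂ (x j) v : ℂ)) • x j := by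
  simp only [matFun, LinearMap.sum_apply, LinearMap.smul_apply, LinearMap.smulRight_apply,
    smul_smul]
  rfl

set_option maxHeartbeats 2000000 in
/-- (Lemma 3.3.) For `𝒳̃ = span{x_{t−p+i+1},…,x_t}^⊥` and
`𝒴̃ = 𝒳̃ ∩ 𝒴`, one has `dim 𝒴̃ ≥ i`.  If `η_p > λ_{t+1}` and `f(λ_j) ≠ 0` for
`j ≤ t−p+i`, then `𝒴̃'_i = f(A)𝒴̃_i` has dimension `i` for every `i`-dimensional
`𝒴̃_i ⊆ 𝒴̃`; if in addition `|f(λ₁)| ≥ ⋯ ≥ |f(λ_{t−p+i})| > ν_t` and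
`ỹ' = f(A)ỹ` is a Ritz vector for the smallest Ritz value `η̃'_i` of `𝒴̃'_i` with
`λ_{t−p+i} > η̃'_i`, then, with `ỹ° = f(λ_{t−p+i})w̃ + ν_t z̃`, one has
`λ_{t−p+i} > η̃'_i = ρ(ỹ') ≥ ρ(ỹ°) ≥ ρ(ỹ) ≥ η̃_i > λ_{t+1}` and
`(ρ(w̃) − ρ(ỹ°))/(ρ(ỹ°) − ρ(z̃)) = (ν_t²/|f(λ_{t−p+i})|²)·(ρ(w̃) − ρ(ỹ))/(ρ(ỹ) − ρ(z̃))`.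
(0-indexed: `lam ⟨j⟩` is `λ_{j+1}`.) -/
theorem stmt12 {n p i t : ℕ} (hi : 1 ≤ i) (hip : i ≤ p)
    (hpt : p ≤ t) (htn : t < n)
    (A : Matrix (Fin n) (Fin n) ℂ) (hA : A.IsHermitian)
    (lam : Fin n → ℝ) (hlam : Antitone lam)
    (x : Fin n → EuclideanSpace ℂ (Fin n)) (hx : Orthonormal ℂ x)
    (heig : ∀ j, Matrix.toEuclideanLin A (x j) = (lam j : ℂ) • x j)
    (Y : Submodule ℂ (EuclideanSpace ℂ (Fin n))) (hY : Module.finrank ℂ Y = p)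
    (f : ℝ → ℝ)
    (Yt : Submodule ℂ (EuclideanSpace ℂ (Fin n)))
    (hYt : Yt = (Submodule.span ℂ
      (x '' {j | t - p + i ≤ (j : ℕ) ∧ (j : ℕ) < t}))ᗮ ⊓ Y) :
    i ≤ Module.finrank ℂ Yt ∧
    (lam ⟨t, htn⟩ < ritzValue A Y p →
      (∀ j : Fin n, (j : ℕ) < t - p + i → f (lam j) ≠ 0) →
      ∀ Yi : Submodule ℂ (EuclideanSpace ℂ (Fin n)), Yi ≤ Yt →
        Module.finrank ℂ Yi = i →
        Module.finrank ℂ (Yi.map (matFun lam x f)) = i ∧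
        (∀ νt : ℝ,
          IsGreatest ((fun j => |f (lam j)|) '' {j : Fin n | t ≤ (j : ℕ)}) νt →
          (∀ j k : Fin n, (j : ℕ) ≤ (k : ℕ) → (k : ℕ) < t - p + i →
            |f (lam k)| ≤ |f (lam j)|) →
          νt < |f (lam ⟨t - p + i - 1, by omega⟩)| →
          ∀ yt : EuclideanSpace ℂ (Fin n), yt ∈ Yi → yt ≠ 0 →
          IsRitzVector A (Yi.map (matFun lam x f))
            (ritzValue A (Yi.map (matFun lam x f)) i) (matFun lam x f yt) →
          ritzValue A (Yi.map (matFun lam x f)) i < lam ⟨t - p + i - 1, by omega⟩ →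
          ∀ wt zt yto : EuclideanSpace ℂ (Fin n),
          wt = (∑ j ∈ Finset.univ.filter (fun j : Fin n => (j : ℕ) < t - p + i),
            (inner ℂ (x j) yt : ℂ) • x j) →
          zt = (∑ j ∈ Finset.univ.filter (fun j : Fin n => t ≤ (j : ℕ)),
            (inner ℂ (x j) yt : ℂ) • x j) →
          yto = (f (lam ⟨t - p + i - 1, by omega⟩) : ℂ) • wt + (νt : ℂ) • zt →
          (ritzValue A (Yi.map (matFun lam x f)) i < lam ⟨t - p + i - 1, by omega⟩ ∧
            ritzValue A (Yi.map (matFun lam x f)) i = rayleigh A (matFun lam x f yt) ∧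
            rayleigh A yto ≤ rayleigh A (matFun lam x f yt) ∧
            rayleigh A yt ≤ rayleigh A yto ∧
            ritzValue A Yi i ≤ rayleigh A yt ∧
            lam ⟨t, htn⟩ < ritzValue A Yi i) ∧
          (rayleigh A wt - rayleigh A yto) / (rayleigh A yto - rayleigh A zt) =
            νt ^ 2 / |f (lam ⟨t - p + i - 1, by omega⟩)| ^ 2 *
              ((rayleigh A wt - rayleigh A yt) /
                (rayleigh A yt - rayleigh A zt)))) := by
  classical
  have hn : 0 < n := by omega
  set m := t - p + i with hmdef
  have hmidv : ∀ v ∈ Yt, ∀ j : Fin n, m ≤ (j:ℕ) → (j:ℕ) < t → (inner ℂ (x j) v : ℂ) = 0 := by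
    intro v hv j hj1 hj2
    rw [hYt] at hv
    exact (Submodule.mem_orthogonal _ v).mp hv.1 (x j)
      (Submodule.subset_span ⟨j, ⟨hj1, hj2⟩, rfl⟩)
  constructor
  · -- dimension bound
    set M := Submodule.span ℂ (x '' {j : Fin n | m ≤ (j:ℕ) ∧ (j:ℕ) < t}) with hM
    have hMcard : Module.finrank ℂ M ≤ p - i := by
      have h1 : (x '' {j : Fin n | m ≤ (j:ℕ) ∧ (j:ℕ) < t})
          = ↑(Finset.image x ({j : Fin n | m ≤ (j:ℕ) ∧ (j:ℕ) < t}).toFinset) := by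
        rw [Finset.coe_image, Set.coe_toFinset]
      rw [hM, h1]
      refine le_trans (finrank_span_finset_le_card _) (le_trans Finset.card_image_le ?_)
      have h2 : ({j : Fin n | m ≤ (j:ℕ) ∧ (j:ℕ) < t}).toFinset.card
          ≤ (Finset.Ico m t).card := by
        apply Finset.card_le_card_of_injOn Fin.val
        · intro a ha
          simp only [Finset.mem_coe, Set.mem_toFinset, Set.mem_setOf_eq, Finset.mem_filter, Finset.mem_univ, true_and] at ha
          simp [Finset.mem_Ico, ha.1, ha.2]
        · exact fun a _ b _ h => Fin.val_injective h
      rw [Nat.card_Ico] at h2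
      omega
    have e1 := Submodule.finrank_add_finrank_orthogonal M
    have e2 := Submodule.finrank_sup_add_finrank_inf_eq Mᗮ Y
    have e3 : Module.finrank ℂ (Mᗮ ⊔ Y : Submodule ℂ (EuclideanSpace ℂ (Fin n)))
        ≤ n := by
      have := Submodule.finrank_le (Mᗮ ⊔ Y : Submodule ℂ (EuclideanSpace ℂ (Fin n)))
      rwa [finrank_euclideanSpace_fin] at this
    rw [finrank_euclideanSpace_fin] at e1
    rw [hYt]
    omega
  · intro hη hfne Yi hYiYt hYi
    have hytY : ∀ v ∈ Yi, v ∈ Y := by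
      intro v hv
      have := hYiYt hv
      rw [hYt] at this
      exact this.2
    -- injectivity of matFun on Yi
    have hinj : ∀ v ∈ Yi, matFun lam x f v = 0 → v = 0 := by
      intro v hv h0
      by_contra hvne
      have hco : ∀ k : Fin n, (f (lam k) : ℂ) * (inner ℂ (x k) v : ℂ) = 0 := by
        intro k
        have := coord_sum' hx (fun j => (f (lam j) : ℂ) * (inner ℂ (x j) v : ℂ)) k
        rw [← matFun_apply', h0] at this
        rw [← this, inner_zero_right]
      have hgood : ∀ k : Fin n, (k:ℕ) < t → (inner ℂ (x k) v : ℂ) = 0 := by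
        intro k hk
        by_cases hkm : (k:ℕ) < m
        · have := hco k
          rcases mul_eq_zero.mp this with h | h
          · exact absurd (by exact_mod_cast h) (hfne k hkm)
          · exact h
        · exact hmidv v (hYiYt hv) k (by omega) hk
      have hD : (0:ℝ) < ∑ j, ‖(inner ℂ (x j) v : ℂ)‖ ^ 2 := by
        rw [← norm_sq_sum' hx, ← basis_expand' hn hx v]
        have : ‖v‖ ≠ 0 := norm_ne_zero_iff.mpr hvne
        positivity
      have hub : rayleigh A v ≤ lam ⟨t, htn⟩ := by
        rw [rayleigh_eq' hn hx heig v, div_le_iff₀ hD]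
        rw [Finset.mul_sum]
        apply Finset.sum_le_sum
        intro j _
        by_cases hj : (j:ℕ) < t
        · rw [hgood j hj]
          simp
        · exact mul_le_mul_of_nonneg_right (hlam (by simp [Fin.le_def]; omega))
            (by positivity)
      have hlb := ritz_le' hn hlam hx heig hY (hytY v hv) hvne
      linarith
    have hmaprank : Module.finrank ℂ (Yi.map (matFun lam x f)) = i := by
      have hker : Function.Injective ((matFun lam x f).domRestrict Yi) := by
        rw [← LinearMap.ker_eq_bot, LinearMap.ker_eq_bot']
        rintro ⟨v, hv⟩ h0
        have h0' : matFun lam x f v = 0 := by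
          simpa using h0
        exact Subtype.ext (hinj v hv h0')
      have hr := LinearMap.finrank_range_of_inj hker
      rw [LinearMap.range_domRestrict] at hr
      rw [hr, hYi]
    refine ⟨hmaprank, ?_⟩
    intro νt hνt hmono hν yt hytYi hyt0 hRitz hclt wt zt yto hw hz hyo
    set c := ritzValue A (Yi.map (matFun lam x f)) i with hcdef
    have hmn' : m - 1 < n := by omega
    set fl := f (lam ⟨m - 1, hmn'⟩) with hfldef
    have hν' : νt < |fl| := hν
    -- index comparisons
    have hLj : ∀ j : Fin n, (j:ℕ) < m → lam ⟨m - 1, hmn'⟩ ≤ lam j :=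
      fun j hj => hlam (by simp [Fin.le_def]; omega)
    have hjt : ∀ j : Fin n, t ≤ (j:ℕ) → lam j ≤ lam ⟨t, htn⟩ :=
      fun j hj => hlam (by simp [Fin.le_def]; omega)
    have hLt : lam ⟨t, htn⟩ ≤ lam ⟨m - 1, hmn'⟩ := hlam (by simp [Fin.le_def]; omega)
    have hν0 : 0 ≤ νt := by
      obtain ⟨j, _, hje⟩ := hνt.1
      rw [← hje]; exact abs_nonneg _
    have hfν : ∀ j : Fin n, t ≤ (j:ℕ) → f (lam j)^2 ≤ νt^2 := by
      intro j hj
      have h1 : |f (lam j)| ≤ νt := hνt.2 ⟨j, hj, rfl⟩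
      nlinarith [abs_nonneg (f (lam j)), sq_abs (f (lam j))]
    have hfabs : ∀ j : Fin n, (j:ℕ) < m → fl^2 ≤ f (lam j)^2 := by
      intro j hj
      have h1 : |fl| ≤ |f (lam j)| := hmono j ⟨m-1, hmn'⟩ (by simp; omega) (by simp; omega)
      nlinarith [abs_nonneg fl, abs_nonneg (f (lam j)), sq_abs fl, sq_abs (f (lam j))]
    have hfl2 : (0:ℝ) < fl^2 := by
      nlinarith [sq_abs fl, lt_of_le_of_lt hν0 hν']
    have hνfl : νt^2 ≤ fl^2 := by
      nlinarith [sq_abs fl, lt_of_le_of_lt hν0 hν']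
    -- coefficient functions and weights
    set cw : Fin n → ℂ := fun j => if (j:ℕ) < m then (inner ℂ (x j) yt : ℂ) else 0 with hcwdef
    set cz : Fin n → ℂ := fun j => if t ≤ (j:ℕ) then (inner ℂ (x j) yt : ℂ) else 0 with hczdef
    set Bq : Fin n → ℝ := fun j => ‖(inner ℂ (x j) yt : ℂ)‖^2 with hBqdef
    set gw : Fin n → ℝ := fun j => if (j:ℕ) < m then Bq j else 0 with hgwdef
    set gz : Fin n → ℝ := fun j => if t ≤ (j:ℕ) then Bq j else 0 with hgzdef
    set W := ∑ j, gw j with hWdef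
    set Nw := ∑ j, lam j * gw j with hNwdef
    set Zs := ∑ j, gz j with hZsdef
    set Nz := ∑ j, lam j * gz j with hNzdef
    set DF := ∑ j, f (lam j)^2 * Bq j with hDFdef
    set NF := ∑ j, lam j * (f (lam j)^2 * Bq j) with hNFdef
    have hBqnn : ∀ j, 0 ≤ Bq j := fun j => sq_nonneg _
    have hgw_nn : ∀ j, 0 ≤ gw j := by
      intro j
      show (0:ℝ) ≤ if (j:ℕ) < m then Bq j else 0
      split_ifs
      · exact hBqnn j
      · exact le_refl 0
    have hgz_nn : ∀ j, 0 ≤ gz j := by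
      intro j
      show (0:ℝ) ≤ if t ≤ (j:ℕ) then Bq j else 0
      split_ifs
      · exact hBqnn j
      · exact le_refl 0
    have hWnn : 0 ≤ W := Finset.sum_nonneg fun j _ => hgw_nn j
    have hZnn : 0 ≤ Zs := Finset.sum_nonneg fun j _ => hgz_nn j
    have hbm : ∀ j : Fin n, m ≤ (j:ℕ) → (j:ℕ) < t → (inner ℂ (x j) yt : ℂ) = 0 :=
      fun j hj1 hj2 => hmidv yt (hYiYt hytYi) j hj1 hj2
    have hBq_split : ∀ j, Bq j = gw j + gz j := by
      intro j
      show Bq j = (if (j:ℕ) < m then Bq j else 0) + (if t ≤ (j:ℕ) then Bq j else 0)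
      by_cases h1 : (j:ℕ) < m
      · rw [if_pos h1, if_neg (by omega)]; ring
      · by_cases h2 : t ≤ (j:ℕ)
        · rw [if_neg h1, if_pos h2]; ring
        · rw [if_neg h1, if_neg h2]
          have hb0 := hbm j (by omega) (by omega)
          show ‖(inner ℂ (x j) yt : ℂ)‖^2 = 0 + 0
          rw [hb0]; simp
    -- vector expansions
    have hwtsum : wt = ∑ j, cw j • x j := by
      rw [hw, Finset.sum_filter]
      exact Finset.sum_congr rfl fun j _ => by
        show _ = (if (j:ℕ) < m then (inner ℂ (x j) yt : ℂ) else 0) • x j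
        split_ifs <;> simp
    have hztsum : zt = ∑ j, cz j • x j := by
      rw [hz, Finset.sum_filter]
      exact Finset.sum_congr rfl fun j _ => by
        show _ = (if t ≤ (j:ℕ) then (inner ℂ (x j) yt : ℂ) else 0) • x j
        split_ifs <;> simp
    have hytosum : yto = ∑ j, ((fl:ℂ) * cw j + (νt:ℂ) * cz j) • x j := by
      rw [hyo, hwtsum, hztsum, Finset.smul_sum, Finset.smul_sum, ← Finset.sum_add_distrib]
      exact Finset.sum_congr rfl fun j _ => by
        rw [smul_smul, smul_smul, ← add_smul]
    have hFytsum : matFun lam x f yt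
        = ∑ j, ((f (lam j) : ℂ) * (inner ℂ (x j) yt : ℂ)) • x j := matFun_apply' lam x f yt
    -- squared norms of coefficients
    have hcw_sq : ∀ j, ‖cw j‖^2 = gw j := by
      intro j
      show ‖(if (j:ℕ) < m then (inner ℂ (x j) yt : ℂ) else 0)‖^2
        = (if (j:ℕ) < m then Bq j else 0)
      split_ifs
      · rfl
      · simp
    have hcz_sq : ∀ j, ‖cz j‖^2 = gz j := by
      intro j
      show ‖(if t ≤ (j:ℕ) then (inner ℂ (x j) yt : ℂ) else 0)‖^2
        = (if t ≤ (j:ℕ) then Bq j else 0)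
      split_ifs
      · rfl
      · simp
    have hcyo_sq : ∀ j, ‖(fl:ℂ) * cw j + (νt:ℂ) * cz j‖^2 = fl^2 * gw j + νt^2 * gz j := by
      intro j
      show ‖(fl:ℂ) * (if (j:ℕ) < m then (inner ℂ (x j) yt : ℂ) else 0)
        + (νt:ℂ) * (if t ≤ (j:ℕ) then (inner ℂ (x j) yt : ℂ) else 0)‖^2
        = fl^2 * (if (j:ℕ) < m then Bq j else 0) + νt^2 * (if t ≤ (j:ℕ) then Bq j else 0)
      by_cases h1 : (j:ℕ) < m
      · rw [if_pos h1, if_neg (by omega), if_pos h1, if_neg (by omega)]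
        show ‖(fl:ℂ) * (inner ℂ (x j) yt : ℂ) + (νt:ℂ) * 0‖^2 = fl^2 * Bq j + νt^2 * 0
        rw [mul_zero, add_zero, mul_zero, add_zero, norm_mul, mul_pow]
        show ‖(fl:ℂ)‖^2 * _ = fl^2 * Bq j
        rw [Complex.norm_real, Real.norm_eq_abs, sq_abs]
      · by_cases h2 : t ≤ (j:ℕ)
        · rw [if_neg h1, if_pos h2, if_neg h1, if_pos h2]
          show ‖(fl:ℂ) * 0 + (νt:ℂ) * (inner ℂ (x j) yt : ℂ)‖^2 = fl^2 * 0 + νt^2 * Bq j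
          rw [mul_zero, zero_add, mul_zero, zero_add, norm_mul, mul_pow]
          show ‖(νt:ℂ)‖^2 * _ = νt^2 * Bq j
          rw [Complex.norm_real, Real.norm_eq_abs, sq_abs]
        · rw [if_neg h1, if_neg h2, if_neg h1, if_neg h2]
          simp
    have hcF_sq : ∀ j, ‖(f (lam j) : ℂ) * (inner ℂ (x j) yt : ℂ)‖^2 = f (lam j)^2 * Bq j := by
      intro j
      rw [norm_mul, mul_pow]
      show ‖((f (lam j) : ℝ) : ℂ)‖^2 * _ = f (lam j)^2 * Bq j
      rw [Complex.norm_real, Real.norm_eq_abs, sq_abs]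
    -- rayleigh quotients as fractions
    have hRw : rayleigh A wt = Nw / W := by
      rw [hwtsum, rayleigh_formula' hx heig]
      congr 1
      · exact Finset.sum_congr rfl fun j _ => by rw [hcw_sq j]
      · exact Finset.sum_congr rfl fun j _ => hcw_sq j
    have hRz : rayleigh A zt = Nz / Zs := by
      rw [hztsum, rayleigh_formula' hx heig]
      congr 1
      · exact Finset.sum_congr rfl fun j _ => by rw [hcz_sq j]
      · exact Finset.sum_congr rfl fun j _ => hcz_sq j
    have hRyt : rayleigh A yt = (Nw + Nz) / (W + Zs) := by
      rw [rayleigh_eq' hn hx heig yt]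
      have hnum : ∑ j, lam j * ‖(inner ℂ (x j) yt : ℂ)‖^2 = Nw + Nz := by
        rw [hNwdef, hNzdef, ← Finset.sum_add_distrib]
        exact Finset.sum_congr rfl fun j _ => by
          show lam j * Bq j = lam j * gw j + lam j * gz j
          rw [hBq_split j]; ring
      have hden : ∑ j, ‖(inner ℂ (x j) yt : ℂ)‖^2 = W + Zs := by
        rw [hWdef, hZsdef, ← Finset.sum_add_distrib]
        exact Finset.sum_congr rfl fun j _ => hBq_split j
      rw [hnum, hden]
    have hRyo : rayleigh A yto = (fl^2 * Nw + νt^2 * Nz) / (fl^2 * W + νt^2 * Zs) := by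
      rw [hytosum, rayleigh_formula' hx heig]
      have hnum : ∑ j, lam j * ‖(fl:ℂ) * cw j + (νt:ℂ) * cz j‖^2
          = fl^2 * Nw + νt^2 * Nz := by
        rw [hNwdef, hNzdef, Finset.mul_sum, Finset.mul_sum, ← Finset.sum_add_distrib]
        exact Finset.sum_congr rfl fun j _ => by rw [hcyo_sq j]; ring
      have hden : ∑ j, ‖(fl:ℂ) * cw j + (νt:ℂ) * cz j‖^2 = fl^2 * W + νt^2 * Zs := by
        rw [hWdef, hZsdef, Finset.mul_sum, Finset.mul_sum, ← Finset.sum_add_distrib]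
        exact Finset.sum_congr rfl fun j _ => hcyo_sq j
      rw [hnum, hden]
    have hRF : rayleigh A (matFun lam x f yt) = NF / DF := by
      rw [hFytsum, rayleigh_formula' hx heig]
      have hnum : ∑ j, lam j * ‖(f (lam j) : ℂ) * (inner ℂ (x j) yt : ℂ)‖^2 = NF := by
        rw [hNFdef]
        exact Finset.sum_congr rfl fun j _ => by rw [hcF_sq j]
      have hden : ∑ j, ‖(f (lam j) : ℂ) * (inner ℂ (x j) yt : ℂ)‖^2 = DF := by
        rw [hDFdef]
        exact Finset.sum_congr rfl fun j _ => hcF_sq j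
      rw [hnum, hden]
    -- positivity
    have hDy : (0:ℝ) < W + Zs := by
      have h1 : ‖yt‖^2 = ∑ j, Bq j := by
        conv_lhs => rw [basis_expand' hn hx yt]
        exact norm_sq_sum' hx _
      have h2 : ∑ j, Bq j = W + Zs := by
        rw [hWdef, hZsdef, ← Finset.sum_add_distrib]
        exact Finset.sum_congr rfl fun j _ => hBq_split j
      have h3 : (0:ℝ) < ‖yt‖^2 := by
        have := norm_ne_zero_iff.mpr hyt0
        positivity
      rw [h1, h2] at h3
      exact h3
    have hNwL : lam ⟨m - 1, hmn'⟩ * W ≤ Nw := by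
      rw [hWdef, hNwdef, Finset.mul_sum]
      apply Finset.sum_le_sum
      intro j _
      by_cases h : (j:ℕ) < m
      · exact mul_le_mul_of_nonneg_right (hLj j h) (hgw_nn j)
      · have hz0 : gw j = 0 := if_neg h
        rw [hz0, mul_zero, mul_zero]
    have hNzt : Nz ≤ lam ⟨t, htn⟩ * Zs := by
      rw [hZsdef, hNzdef, Finset.mul_sum]
      apply Finset.sum_le_sum
      intro j _
      by_cases h : t ≤ (j:ℕ)
      · exact mul_le_mul_of_nonneg_right (hjt j h) (hgz_nn j)
      · have hz0 : gz j = 0 := if_neg h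
        rw [hz0, mul_zero, mul_zero]
    have hηyt : ritzValue A Y p ≤ rayleigh A yt :=
      ritz_le' hn hlam hx heig hY (hytY yt hytYi) hyt0
    have hRytgt : lam ⟨t, htn⟩ < rayleigh A yt := lt_of_lt_of_le hη hηyt
    have hRytgt' : lam ⟨t, htn⟩ * (W + Zs) < Nw + Nz := by
      have h := hRytgt
      rw [hRyt] at h
      exact (lt_div_iff₀ hDy).mp h
    have hWpos : (0:ℝ) < W := by
      rcases lt_or_ge 0 W with h | h
      · exact h
      exfalso
      have hW0 : W = 0 := le_antisymm h hWnn
      have hsum0 : ∑ j, gw j = 0 := by rw [← hWdef]; exact hW0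
      have hgw0 : ∀ j ∈ Finset.univ, gw j = 0 :=
        (Finset.sum_eq_zero_iff_of_nonneg (fun j _ => hgw_nn j)).mp hsum0
      have hNw0 : Nw = 0 := by
        rw [hNwdef]
        exact Finset.sum_eq_zero fun j hj => by rw [hgw0 j hj, mul_zero]
      rw [hW0, hNw0] at hRytgt'
      simp only [add_zero, zero_add] at hRytgt'
      linarith
    have hDyo : (0:ℝ) < fl^2 * W + νt^2 * Zs := by
      nlinarith [mul_pos hfl2 hWpos, mul_nonneg (sq_nonneg νt) hZnn]
    have hkey : Nz * W ≤ Nw * Zs := by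
      nlinarith [mul_le_mul_of_nonneg_right hNwL hZnn, mul_le_mul_of_nonneg_right hNzt hWnn,
        mul_nonneg (mul_nonneg (sub_nonneg.mpr hLt) hWnn) hZnn]
    -- (4) rayleigh yt ≤ rayleigh yto
    have h4 : rayleigh A yt ≤ rayleigh A yto := by
      rw [hRyt, hRyo, div_le_div_iff₀ hDy hDyo]
      nlinarith [mul_nonneg (sub_nonneg.mpr hνfl) (sub_nonneg.mpr hkey)]
    have hRyogt' : lam ⟨t, htn⟩ * (fl^2 * W + νt^2 * Zs) < fl^2 * Nw + νt^2 * Nz := by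
      have h := lt_of_lt_of_le hRytgt h4
      rw [hRyo] at h
      exact (lt_div_iff₀ hDyo).mp h
    -- DF positivity
    have hDFge : fl^2 * W ≤ DF := by
      rw [hWdef, hDFdef, Finset.mul_sum]
      apply Finset.sum_le_sum
      intro j _
      by_cases h : (j:ℕ) < m
      · have hgwj : gw j = Bq j := if_pos h
        rw [hgwj]
        exact mul_le_mul_of_nonneg_right (hfabs j h) (hBqnn j)
      · have hgwj : gw j = 0 := if_neg h
        rw [hgwj, mul_zero]
        exact mul_nonneg (sq_nonneg _) (hBqnn j)
    have hDFpos : (0:ℝ) < DF := lt_of_lt_of_le (mul_pos hfl2 hWpos) hDFge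
    have h2eq : c = rayleigh A (matFun lam x f yt) := hRitz.2.2.1.symm
    have hcR : c = NF / DF := h2eq.trans hRF
    have hcLt : NF / DF < lam ⟨m - 1, hmn'⟩ := by
      have h := hclt
      rw [hcR] at h
      exact h
    -- sum expansions
    have expandO : ∀ r : ℝ, fl^2 * Nw + νt^2 * Nz - r * (fl^2 * W + νt^2 * Zs)
        = ∑ j, (lam j - r) * (fl^2 * gw j + νt^2 * gz j) := by
      intro r
      rw [hNwdef, hNzdef, hWdef, hZsdef]
      rw [show (∑ j, (lam j - r) * (fl^2 * gw j + νt^2 * gz j))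
          = ∑ j, (fl^2 * (lam j * gw j) + νt^2 * (lam j * gz j)
              - (r * (fl^2 * gw j) + r * (νt^2 * gz j)))
        from Finset.sum_congr rfl fun j _ => by ring]
      simp only [Finset.sum_sub_distrib, Finset.sum_add_distrib, ← Finset.mul_sum]
      ring
    have expandF : ∀ r : ℝ, NF - r * DF = ∑ j, (lam j - r) * (f (lam j)^2 * Bq j) := by
      intro r
      rw [hNFdef, hDFdef]
      rw [show (∑ j, (lam j - r) * (f (lam j)^2 * Bq j))
          = ∑ j, (lam j * (f (lam j)^2 * Bq j) - r * (f (lam j)^2 * Bq j))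
        from Finset.sum_congr rfl fun j _ => by ring]
      simp only [Finset.sum_sub_distrib, ← Finset.mul_sum]
    -- λ_t < NF/DF
    have hstep : ∀ r : ℝ, lam ⟨t, htn⟩ ≤ r → r ≤ lam ⟨m - 1, hmn'⟩ →
        fl^2 * Nw + νt^2 * Nz - r * (fl^2 * W + νt^2 * Zs) ≤ NF - r * DF := by
      intro r hr1 hr2
      rw [expandO r, expandF r]
      apply Finset.sum_le_sum
      intro j _
      by_cases h1 : (j:ℕ) < m
      · have hgwj : gw j = Bq j := if_pos h1
        have hgzj : gz j = 0 := if_neg (by omega)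
        rw [hgwj, hgzj, mul_zero, add_zero]
        have hlj : r ≤ lam j := le_trans hr2 (hLj j h1)
        exact mul_le_mul_of_nonneg_left
          (mul_le_mul_of_nonneg_right (hfabs j h1) (hBqnn j)) (sub_nonneg.mpr hlj)
      · by_cases h2 : t ≤ (j:ℕ)
        · have hgwj : gw j = 0 := if_neg h1
          have hgzj : gz j = Bq j := if_pos h2
          rw [hgwj, hgzj, mul_zero, zero_add]
          have hlj : lam j ≤ r := le_trans (hjt j h2) hr1
          exact mul_le_mul_of_nonpos_left
            (mul_le_mul_of_nonneg_right (hfν j h2) (hBqnn j)) (sub_nonpos.mpr hlj)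
        · have hgwj : gw j = 0 := if_neg h1
          have hgzj : gz j = 0 := if_neg h2
          have hBq0 : Bq j = 0 := by rw [hBq_split j, hgwj, hgzj, add_zero]
          rw [hgwj, hgzj, hBq0]
          simp
    have hltNF : lam ⟨t, htn⟩ * DF < NF := by
      have h := hstep (lam ⟨t, htn⟩) le_rfl hLt
      linarith
    have hltR : lam ⟨t, htn⟩ < NF / DF := (lt_div_iff₀ hDFpos).mpr hltNF
    -- (3) rayleigh yto ≤ rayleigh (F yt)
    have h3 : rayleigh A yto ≤ rayleigh A (matFun lam x f yt) := by
      have hsum := hstep (NF / DF) (le_of_lt hltR) (le_of_lt hcLt)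
      have hzero : NF - (NF / DF) * DF = 0 := by field_simp; ring
      rw [hRyo, hRF, div_le_iff₀ hDyo]
      linarith
    -- (5), (6)
    have h5 : ritzValue A Yi i ≤ rayleigh A yt :=
      ritz_le' hn hlam hx heig hYi hytYi hyt0
    have h6 : lam ⟨t, htn⟩ < ritzValue A Yi i := by
      refine lt_of_lt_of_le hη (ritz_ge' hn hlam hx heig hi le_rfl hYi ?_)
      intro v hv hv0
      exact ritz_le' hn hlam hx heig hY (hytY v hv) hv0
    -- (7) the ratio identity
    have h7 : (rayleigh A wt - rayleigh A yto) / (rayleigh A yto - rayleigh A zt) =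
        νt ^ 2 / |fl| ^ 2 *
          ((rayleigh A wt - rayleigh A yt) / (rayleigh A yt - rayleigh A zt)) := by
      by_cases hΔ : Nw * Zs - Nz * W = 0
      · have z1 : rayleigh A wt - rayleigh A yto = 0 := by
          rw [hRw, hRyo, div_sub_div _ _ hWpos.ne' hDyo.ne']
          have he : Nw * (fl^2 * W + νt^2 * Zs) - W * (fl^2 * Nw + νt^2 * Nz) = 0 := by
            linear_combination νt^2 * hΔ
          rw [he, zero_div]
        have z2 : rayleigh A wt - rayleigh A yt = 0 := by
          rw [hRw, hRyt, div_sub_div _ _ hWpos.ne' hDy.ne']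
          have he : Nw * (W + Zs) - W * (Nw + Nz) = 0 := by linear_combination hΔ
          rw [he, zero_div]
        rw [z1, z2, zero_div, zero_div, mul_zero]
      · have hZspos : (0:ℝ) < Zs := by
          rcases lt_or_ge 0 Zs with h | h
          · exact h
          exfalso
          have hZ0 : Zs = 0 := le_antisymm h hZnn
          have hsum0 : ∑ j, gz j = 0 := by rw [← hZsdef]; exact hZ0
          have hgz0 : ∀ j ∈ Finset.univ, gz j = 0 :=
            (Finset.sum_eq_zero_iff_of_nonneg (fun j _ => hgz_nn j)).mp hsum0
          have hNz0 : Nz = 0 := by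
            rw [hNzdef]
            exact Finset.sum_eq_zero fun j hj => by rw [hgz0 j hj, mul_zero]
          exact hΔ (by rw [hZ0, hNz0]; ring)
        have d1 : rayleigh A wt - rayleigh A yto
            = (νt^2 * (Nw * Zs - Nz * W)) / (W * (fl^2 * W + νt^2 * Zs)) := by
          rw [hRw, hRyo, div_sub_div _ _ hWpos.ne' hDyo.ne']
          congr 1
          ring
        have d2 : rayleigh A yto - rayleigh A zt
            = (fl^2 * (Nw * Zs - Nz * W)) / ((fl^2 * W + νt^2 * Zs) * Zs) := by
          rw [hRyo, hRz, div_sub_div _ _ hDyo.ne' hZspos.ne']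
          congr 1
          ring
        have d3 : rayleigh A wt - rayleigh A yt
            = (Nw * Zs - Nz * W) / (W * (W + Zs)) := by
          rw [hRw, hRyt, div_sub_div _ _ hWpos.ne' hDy.ne']
          congr 1
          ring
        have d4 : rayleigh A yt - rayleigh A zt
            = (Nw * Zs - Nz * W) / ((W + Zs) * Zs) := by
          rw [hRyt, hRz, div_sub_div _ _ hDy.ne' hZspos.ne']
          congr 1
          ring
        rw [d1, d2, d3, d4, sq_abs]
        have h1 : W ≠ 0 := hWpos.ne'
        have h2 : Zs ≠ 0 := hZspos.ne'
        have h3 : fl^2 * W + νt^2 * Zs ≠ 0 := hDyo.ne'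
        have h4 : W + Zs ≠ 0 := hDy.ne'
        have h5 : fl^2 ≠ 0 := hfl2.ne'
        rw [div_div_div_comm, div_div_div_comm (Nw * Zs - Nz * W) (W * (W + Zs))]
        field_simp
    exact ⟨⟨hclt, h2eq, h3, h4, h5, h6⟩, h7⟩
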